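/- Let G be a finite group, F a field, n ≥ 1, and let ρ : G → GL(n,F) be a faithful irreducible representation. Let N be the normalizer and C the centralizer of the image ρ(G) in GL(n,F). Then the quotient group N/C is isomorphic to the subgroup of Aut(G) consisting of those automorphisms θ for which ρ∘θ is equivalent to ρ, i.e., for which there exists x ∈ GL(n,F) with ρ(θ(g)) = x·ρ(g)·x⁻¹ for all g ∈ G. -/

import Mathlib

namespace AuxNMC

variable {K : Type*} [Group K] {H : Subgroup K}

/-- Conjugation by an element of the normalizer, as an automorphism of `H`. -/
def conjOfNormalizer (y : (Subgroup.normalizer (H : Set K))) : H ≃* H where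
  toFun a := ⟨(y : K) * a * (y : K)⁻¹, (Subgroup.mem_normalizer_iff.mp y.2 a).mp a.2⟩
  invFun a := ⟨(y : K)⁻¹ * a * (y : K), by
      have h := (Subgroup.mem_normalizer_iff.mp (y⁻¹ : (Subgroup.normalizer (H : Set K))).2 a).mp a.2
      simpa using h⟩
  left_inv a := by ext; simp [mul_assoc]
  right_inv a := by ext; simp [mul_assoc]
  map_mul' a b := by ext; simp [mul_assoc]

@[simp] lemma conjOfNormalizer_apply (y : (Subgroup.normalizer (H : Set K))) (a : H) :
    (conjOfNormalizer y a : K) = (y : K) * a * (y : K)⁻¹ := rfl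

/-- Conjugation as a homomorphism `N(H) →* Aut(H)`. -/
def conjHom : (Subgroup.normalizer (H : Set K)) →* MulAut H where
  toFun := conjOfNormalizer
  map_one' := by ext a; simp [conjOfNormalizer]
  map_mul' y z := by ext a; simp [conjOfNormalizer, mul_assoc]

@[simp] lemma conjHom_apply (y : (Subgroup.normalizer (H : Set K))) (a : H) :
    ((conjHom y : MulAut H) a : K) = (y : K) * a * (y : K)⁻¹ := rfl

end AuxNMC

theorem normalizer_mod_centralizer_iso_stabilizer_of_equivalence_class
    {G : Type*} [Group G] [Finite G] {n : ℕ} {F : Type*} [Field F]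
    (ρ : G →* Matrix.GeneralLinearGroup (Fin n) F)
    (hfaith : Function.Injective ρ)
    (hirr : ∀ W : Submodule F (Fin n → F),
      (∀ g : G, ∀ v ∈ W, Matrix.mulVec ((ρ g : Matrix (Fin n) (Fin n) F)) v ∈ W) →
      W = ⊥ ∨ W = ⊤) :
    ∃ f : (Subgroup.normalizer (ρ.range : Set (Matrix.GeneralLinearGroup (Fin n) F))) →* MulAut G,
      (∀ θ : MulAut G, θ ∈ f.range ↔
        ∃ x : Matrix.GeneralLinearGroup (Fin n) F, ∀ g : G, ρ (θ g) = x * ρ g * x⁻¹) ∧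
      (∀ y : Subgroup.normalizer (ρ.range : Set (Matrix.GeneralLinearGroup (Fin n) F)), y ∈ f.ker ↔
        (y : Matrix.GeneralLinearGroup (Fin n) F) ∈
          Subgroup.centralizer (ρ.range : Set (Matrix.GeneralLinearGroup (Fin n) F))) := by
  classical
  set K := Matrix.GeneralLinearGroup (Fin n) F
  let e : G ≃* ρ.range := MonoidHom.ofInjective hfaith
  let f : Subgroup.normalizer (ρ.range : Set K) →* MulAut G :=
    ((MulAut.congr e).symm.toMonoidHom).comp AuxNMC.conjHom
  have key : ∀ (y : Subgroup.normalizer (ρ.range : Set K)) (g : G),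
      ρ (f y g) = (y : K) * ρ g * (y : K)⁻¹ := by
    intro y g
    have h1 : f y g = e.symm (AuxNMC.conjHom y (e g)) := rfl
    rw [h1, MonoidHom.apply_ofInjective_symm hfaith]
    simp [e, MonoidHom.ofInjective_apply]
    exact AuxNMC.conjHom_apply y _
  refine ⟨f, ?_, ?_⟩
  · intro θ
    constructor
    · rintro ⟨y, rfl⟩
      exact ⟨(y : K), fun g => key y g⟩
    · rintro ⟨x, hx⟩
      have hxmem : x ∈ Subgroup.normalizer (ρ.range : Set K) := by
        rw [Subgroup.mem_normalizer_iff]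
        intro a
        constructor
        · rintro ⟨g, rfl⟩
          exact ⟨θ g, hx g⟩
        · rintro ⟨g, hg⟩
          refine ⟨θ⁻¹ g, ?_⟩
          have h2 : ρ g = x * ρ (θ⁻¹ g) * x⁻¹ := by
            have := hx (θ⁻¹ g)
            simpa using this
          have h3 : x * ρ (θ⁻¹ g) * x⁻¹ = x * a * x⁻¹ := by rw [← h2, hg]
          exact mul_left_cancel (mul_right_cancel h3)
      refine ⟨⟨x, hxmem⟩, ?_⟩
      ext g
      apply hfaith
      rw [key ⟨x, hxmem⟩ g]
      exact (hx g).symm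
  · intro y
    rw [MonoidHom.mem_ker, Subgroup.mem_centralizer_iff]
    constructor
    · intro hy a ha
      obtain ⟨g, rfl⟩ := ha
      have := key y g
      rw [hy] at this
      simp only [MulAut.one_apply] at this
      calc ρ g * (y : K) = ((y : K) * ρ g * (y : K)⁻¹) * (y : K) := by rw [← this]
        _ = (y : K) * ρ g := by group
    · intro hy
      ext g
      apply hfaith
      rw [key y g]
      have := hy (ρ g) ⟨g, rfl⟩
      simp only [MulAut.one_apply]
      calc (y : K) * ρ g * (y : K)⁻¹ = (ρ g * (y : K)) * (y : K)⁻¹ := by rw [← this]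
        _ = ρ g := by group
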